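/- With all weights equal to 1, the generating function of Motzkin N-meanders counted by length equals (10t - 1 + sqrt((1+2t)(1-6t))) / (8t(1-7t)). -/

import Mathlib

/-- A classical walk `v` is compatible with the N-walk `w` if they have the same
length and the `i`-th step of `v` belongs to the `i`-th N-step of `w`. -/
def Compatible (v : List ℤ) (w : List (Finset ℤ)) : Prop :=
  List.Forall₂ (· ∈ ·) v w

/-- The reachable points of an N-walk: endpoints of all compatible classical walks. -/
def reach (w : List (Finset ℤ)) : Set ℤ :=
  {r | ∃ v : List ℤ, Compatible v w ∧ v.sum = r}

/-- Minimal reachable point. -/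
noncomputable def wmin (w : List (Finset ℤ)) : ℤ := sInf (reach w)

/-- Maximal reachable point. -/
noncomputable def wmax (w : List (Finset ℤ)) : ℤ := sSup (reach w)

/-- A Dyck N-walk: every N-step is one of {-1}, {1}, {-1,1}. -/
def IsDyckNWalk (w : List (Finset ℤ)) : Prop :=
  ∀ s ∈ w, s = {-1} ∨ s = {1} ∨ s = ({-1, 1} : Finset ℤ)

/-- A Motzkin N-walk: every N-step is a nonempty subset of {-1,0,1}. -/
def IsMotzkinNWalk (w : List (Finset ℤ)) : Prop :=
  ∀ s ∈ w, s.Nonempty ∧ s ⊆ ({-1, 0, 1} : Finset ℤ)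

/-- A classical meander: all partial sums are nonnegative. -/
def IsMeanderW (v : List ℤ) : Prop := ∀ n : ℕ, 0 ≤ (v.take n).sum

/-- An N-bridge: compatible with at least one classical walk ending at 0. -/
def IsNBridge (w : List (Finset ℤ)) : Prop := ∃ v, Compatible v w ∧ v.sum = 0

/-- An N-meander: compatible with at least one classical meander. -/
def IsNMeander (w : List (Finset ℤ)) : Prop := ∃ v, Compatible v w ∧ IsMeanderW v

/-- An N-excursion: compatible with at least one classical excursion. -/
def IsNExcursion (w : List (Finset ℤ)) : Prop :=
  ∃ v, Compatible v w ∧ IsMeanderW v ∧ v.sum = 0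

/-- Number of Motzkin N-meanders of length n. -/
noncomputable def motzkinMeanderCount (n : ℕ) : ℕ :=
  Nat.card {w : List (Finset ℤ) // w.length = n ∧ IsMotzkinNWalk w ∧ IsNMeander w}


/-! Auxiliary -/

def maxStep (s : Finset ℤ) : ℤ := if 1 ∈ s then 1 else if 0 ∈ s then 0 else -1

def steps : Finset (Finset ℤ) := ({-1,0,1} : Finset ℤ).powerset.erase ∅

lemma mem_steps {s : Finset ℤ} : s ∈ steps ↔ s.Nonempty ∧ s ⊆ ({-1,0,1} : Finset ℤ) := by
  simp [steps, Finset.mem_erase, Finset.nonempty_iff_ne_empty, and_comm]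

lemma neg_one_le_maxStep (s : Finset ℤ) : -1 ≤ maxStep s := by
  unfold maxStep; split <;> [norm_num; split <;> norm_num]

lemma maxStep_mem {s : Finset ℤ} (hs : s ∈ steps) : maxStep s ∈ s := by
  rw [mem_steps] at hs
  obtain ⟨⟨x, hx⟩, hsub⟩ := hs
  unfold maxStep
  split
  · assumption
  · split
    · assumption
    · have := hsub hx
      simp only [Finset.mem_insert, Finset.mem_singleton] at this
      rcases this with h | h | h
      · rwa [← h]
      · subst h; tauto
      · subst h; tauto

lemma le_maxStep {s : Finset ℤ} (hs : s ∈ steps) {x : ℤ} (hx : x ∈ s) : x ≤ maxStep s := by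
  rw [mem_steps] at hs
  have := hs.2 hx
  simp only [Finset.mem_insert, Finset.mem_singleton] at this
  rcases this with h | h | h <;> subst h
  · exact neg_one_le_maxStep s
  · by_cases h1 : (1:ℤ) ∈ s <;> simp [maxStep, h1, hx]
  · simp [maxStep, hx]

def WS : ℕ → ℤ → Finset (List (Finset ℤ))
  | 0, _ => {[]}
  | n+1, h => (steps.filter fun s => 0 ≤ h + maxStep s).biUnion
      fun s => (WS n (h + maxStep s)).image (s :: ·)

lemma mem_WS {n : ℕ} : ∀ {h : ℤ}, 0 ≤ h → ∀ {w : List (Finset ℤ)},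
    (w ∈ WS n h ↔ w.length = n ∧ (∀ s ∈ w, s ∈ steps) ∧
      ∀ k : ℕ, 0 ≤ h + ((w.map maxStep).take k).sum) := by
  induction n with
  | zero =>
    intro h hh w
    simp only [WS, Finset.mem_singleton]
    constructor
    · rintro rfl
      refine ⟨rfl, by simp, fun k => by simpa using hh⟩
    · rintro ⟨hl, -, -⟩
      exact List.eq_nil_of_length_eq_zero hl
  | succ n ih =>
    intro h hh w
    simp only [WS, Finset.mem_biUnion, Finset.mem_image, Finset.mem_filter]
    constructor
    · rintro ⟨s, ⟨hs, hpos⟩, w', hw', rfl⟩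
      obtain ⟨hl, hall, hmea⟩ := (ih hpos).mp hw'
      refine ⟨by simp [hl], ?_, ?_⟩
      · intro u hu
        rcases List.mem_cons.mp hu with rfl | hu
        · exact hs
        · exact hall u hu
      · intro k
        cases k with
        | zero => simpa using hh
        | succ k =>
          have := hmea k
          simp only [List.map_cons, List.take_succ_cons, List.sum_cons]
          linarith
    · rintro ⟨hl, hall, hmea⟩
      cases w with
      | nil => simp at hl
      | cons s w' =>
        have hs : s ∈ steps := hall s (by simp)
        have hpos : 0 ≤ h + maxStep s := by simpa using hmea 1
        refine ⟨s, ⟨hs, hpos⟩, w', ?_, rfl⟩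
        refine (ih hpos).mpr ⟨by simpa using hl, fun u hu => hall u (List.mem_cons_of_mem _ hu), ?_⟩
        intro k
        have := hmea (k+1)
        simp only [List.map_cons, List.take_succ_cons, List.sum_cons] at this
        linarith

lemma sum_take_le : ∀ {v u : List ℤ}, List.Forall₂ (· ≤ ·) v u → ∀ k : ℕ,
    (v.take k).sum ≤ (u.take k).sum := by
  intro v u h
  induction h with
  | nil => intro k; simp
  | cons hab hl ih =>
    intro k
    cases k with
    | zero => simp
    | succ k =>
      simp only [List.take_succ_cons, List.sum_cons]
      exact add_le_add hab (ih k)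

lemma compat_le {v : List ℤ} {w : List (Finset ℤ)} (hc : Compatible v w)
    (hm : ∀ s ∈ w, s ∈ steps) : List.Forall₂ (· ≤ ·) v (w.map maxStep) := by
  induction hc with
  | nil => simp
  | @cons a b l₁ l₂ hab hl ih =>
    simp only [List.map_cons]
    exact List.Forall₂.cons (le_maxStep (hm b (by simp)) hab)
      (ih (fun s hs => hm s (List.mem_cons_of_mem _ hs)))

lemma meander_iff {w : List (Finset ℤ)} (hm : ∀ s ∈ w, s ∈ steps) :
    IsNMeander w ↔ ∀ k : ℕ, 0 ≤ ((w.map maxStep).take k).sum := by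
  constructor
  · rintro ⟨v, hc, hme⟩ k
    exact le_trans (hme k) (sum_take_le (compat_le hc hm) k)
  · intro hk
    refine ⟨w.map maxStep, ?_, hk⟩
    rw [Compatible, List.forall₂_map_left_iff]
    rw [List.forall₂_same]
    exact fun s hs => maxStep_mem (hm s hs)

lemma motzkin_iff {w : List (Finset ℤ)} : IsMotzkinNWalk w ↔ ∀ s ∈ w, s ∈ steps := by
  unfold IsMotzkinNWalk
  simp only [mem_steps]

lemma count_eq_card_WS (n : ℕ) : motzkinMeanderCount n = (WS n 0).card := by
  rw [← Nat.card_eq_finsetCard]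
  apply Nat.card_congr
  apply Equiv.subtypeEquivRight
  intro w
  rw [mem_WS le_rfl]
  constructor
  · rintro ⟨hl, hm, hme⟩
    have hm' := motzkin_iff.mp hm
    exact ⟨hl, hm', by simpa using (meander_iff hm').mp hme⟩
  · rintro ⟨hl, hm, hme⟩
    exact ⟨hl, motzkin_iff.mpr hm, (meander_iff hm).mpr (by simpa using hme)⟩

def F : ℕ → ℕ → ℕ
  | 0, _ => 1
  | n+1, 0 => 4 * F n 1 + 2 * F n 0
  | n+1, h+1 => 4 * F n (h+2) + 2 * F n (h+1) + F n h

lemma card_WS_succ (n : ℕ) (h : ℤ) :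
    (WS (n+1) h).card = ∑ s ∈ steps.filter (fun s => 0 ≤ h + maxStep s),
      (WS n (h + maxStep s)).card := by
  rw [WS, Finset.card_biUnion]
  · refine Finset.sum_congr rfl fun s _ => ?_
    exact Finset.card_image_of_injective _ (fun a b hab => by injection hab)
  · intro x hx y hy hxy
    simp only [Finset.disjoint_left, Finset.mem_image]
    rintro a ⟨w1, -, rfl⟩ ⟨w2, -, h2⟩
    injection h2 with e1 e2
    exact hxy e1.symm

lemma filter_steps_pos {h : ℤ} (hh : 1 ≤ h) :
    steps.filter (fun s => 0 ≤ h + maxStep s) = steps := by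
  apply Finset.filter_true_of_mem
  intro s _
  have : -1 ≤ maxStep s := by unfold maxStep; split <;> [norm_num; split <;> norm_num]
  linarith

lemma filter_steps_zero :
    steps.filter (fun s => 0 ≤ (0:ℤ) + maxStep s) = steps.erase {-1} := by
  decide

lemma card_WS (n : ℕ) : ∀ h : ℕ, (WS n (h : ℤ)).card = F n h := by
  induction n with
  | zero => intro h; simp [WS, F]
  | succ n ih =>
    intro h
    rw [card_WS_succ]
    cases h with
    | zero =>
      simp only [Nat.cast_zero]
      rw [filter_steps_zero]
      rw [show steps.erase {-1} = ({{0}, {-1,0}, {1}, {-1,1}, {0,1}, {-1,0,1}} : Finset (Finset ℤ)) from by decide]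
      rw [Finset.sum_insert (by decide), Finset.sum_insert (by decide),
        Finset.sum_insert (by decide), Finset.sum_insert (by decide),
        Finset.sum_insert (by decide), Finset.sum_singleton]
      have h1 : maxStep {0} = 0 := by decide
      have h2 : maxStep {-1,0} = 0 := by decide
      have h3 : maxStep {1} = 1 := by decide
      have h4 : maxStep {-1,1} = 1 := by decide
      have h5 : maxStep {0,1} = 1 := by decide
      have h6 : maxStep {-1,0,1} = 1 := by decide
      rw [h1, h2, h3, h4, h5, h6]
      have c0 : (0:ℤ) + 0 = ((0:ℕ):ℤ) := by norm_num
      have c1 : (0:ℤ) + 1 = ((1:ℕ):ℤ) := by norm_num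
      rw [c0, c1, ih 0, ih 1, show F (n+1) 0 = 4 * F n 1 + 2 * F n 0 from rfl]
      ring
    | succ h =>
      rw [filter_steps_pos (by exact_mod_cast Nat.succ_le_succ (Nat.zero_le h))]
      rw [show steps = ({{-1}, {0}, {-1,0}, {1}, {-1,1}, {0,1}, {-1,0,1}} : Finset (Finset ℤ)) from by decide]
      rw [Finset.sum_insert (by decide), Finset.sum_insert (by decide),
        Finset.sum_insert (by decide), Finset.sum_insert (by decide),
        Finset.sum_insert (by decide), Finset.sum_insert (by decide), Finset.sum_singleton]
      have h0 : maxStep {-1} = -1 := by decide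
      have h1 : maxStep {0} = 0 := by decide
      have h2 : maxStep {-1,0} = 0 := by decide
      have h3 : maxStep {1} = 1 := by decide
      have h4 : maxStep {-1,1} = 1 := by decide
      have h5 : maxStep {0,1} = 1 := by decide
      have h6 : maxStep {-1,0,1} = 1 := by decide
      rw [h0, h1, h2, h3, h4, h5, h6]
      have em : ((h+1:ℕ):ℤ) + -1 = ((h:ℕ):ℤ) := by push_cast; ring
      have e0 : ((h+1:ℕ):ℤ) + 0 = ((h+1:ℕ):ℤ) := by push_cast; ring
      have e1 : ((h+1:ℕ):ℤ) + 1 = ((h+2:ℕ):ℤ) := by push_cast; ring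
      rw [em, e0, e1, ih h, ih (h+1), ih (h+2),
        show F (n+1) (h+1) = 4 * F n (h+2) + 2 * F n (h+1) + F n h from rfl]
      ring

lemma F_le_pow : ∀ n h, F n h ≤ 7 ^ n := by
  intro n
  induction n with
  | zero => intro h; simp [F]
  | succ n ih =>
    intro h
    cases h with
    | zero =>
      calc F (n+1) 0 = 4 * F n 1 + 2 * F n 0 := rfl
        _ ≤ 4 * 7^n + 2 * 7^n := by
            have := ih 1; have := ih 0; omega
        _ ≤ 7 ^ (n+1) := by rw [pow_succ]; omega
    | succ h =>
      calc F (n+1) (h+1) = 4 * F n (h+2) + 2 * F n (h+1) + F n h := rfl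
        _ ≤ 4 * 7^n + 2 * 7^n + 7^n := by
            have := ih (h+2); have := ih (h+1); have := ih h; omega
        _ = 7 ^ (n+1) := by rw [pow_succ]; omega

section
variable {t : ℝ}

lemma summable_F (ht0 : 0 < t) (ht7 : t < 1/7) (h : ℕ) :
    Summable (fun n : ℕ => (F n h : ℝ) * t ^ n) := by
  refine Summable.of_nonneg_of_le (fun n => by positivity) (fun n => ?_)
    (summable_geometric_of_lt_one (by positivity) (by linarith : 7*t < 1))
  rw [mul_pow]
  apply mul_le_mul_of_nonneg_right _ (by positivity)
  exact_mod_cast (Nat.cast_le (α := ℝ)).mpr (F_le_pow n h)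

noncomputable def Phi (t : ℝ) (h : ℕ) : ℝ := ∑' n, (F n h : ℝ) * t ^ n

lemma Phi_nonneg (ht0 : 0 < t) (h : ℕ) : 0 ≤ Phi t h :=
  tsum_nonneg (fun n => by positivity)

lemma Phi_le (ht0 : 0 < t) (ht7 : t < 1/7) (h : ℕ) : Phi t h ≤ (1 - 7*t)⁻¹ := by
  rw [← tsum_geometric_of_lt_one (by positivity) (by linarith : 7*t < 1)]
  apply Summable.tsum_le_tsum _ (summable_F ht0 ht7 h)
    (summable_geometric_of_lt_one (by positivity) (by linarith))
  intro n
  rw [mul_pow]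
  apply mul_le_mul_of_nonneg_right _ (by positivity)
  exact_mod_cast (Nat.cast_le (α := ℝ)).mpr (F_le_pow n h)

lemma Phi_rec0 (ht0 : 0 < t) (ht7 : t < 1/7) :
    Phi t 0 = 1 + t * (4 * Phi t 1 + 2 * Phi t 0) := by
  have h0 := summable_F ht0 ht7 0
  have h1 := summable_F ht0 ht7 1
  unfold Phi
  conv_lhs => rw [Summable.tsum_eq_zero_add h0]
  have : ∀ n : ℕ, (F (n+1) 0 : ℝ) * t ^ (n+1)
      = t * (4 * ((F n 1 : ℝ) * t^n) + 2 * ((F n 0 : ℝ) * t^n)) := by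
    intro n
    have : F (n+1) 0 = 4 * F n 1 + 2 * F n 0 := rfl
    rw [this]; push_cast; ring
  rw [tsum_congr this, tsum_mul_left,
    Summable.tsum_add ((h1.mul_left 4)) ((h0.mul_left 2)), tsum_mul_left, tsum_mul_left]
  simp only [show F 0 0 = 1 from rfl, Nat.cast_one, pow_zero, mul_one]

lemma Phi_recS (ht0 : 0 < t) (ht7 : t < 1/7) (h : ℕ) :
    Phi t (h+1) = 1 + t * (4 * Phi t (h+2) + 2 * Phi t (h+1) + Phi t h) := by
  have h0 := summable_F ht0 ht7 h
  have h1 := summable_F ht0 ht7 (h+1)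
  have h2 := summable_F ht0 ht7 (h+2)
  unfold Phi
  conv_lhs => rw [Summable.tsum_eq_zero_add h1]
  have : ∀ n : ℕ, (F (n+1) (h+1) : ℝ) * t ^ (n+1)
      = t * ((4 * ((F n (h+2) : ℝ) * t^n) + 2 * ((F n (h+1) : ℝ) * t^n)) + (F n h : ℝ) * t^n) := by
    intro n
    have : F (n+1) (h+1) = 4 * F n (h+2) + 2 * F n (h+1) + F n h := rfl
    rw [this]; push_cast; ring
  rw [tsum_congr this, tsum_mul_left,
    Summable.tsum_add ((h2.mul_left 4).add (h1.mul_left 2)) h0,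
    Summable.tsum_add (h2.mul_left 4) (h1.mul_left 2), tsum_mul_left, tsum_mul_left]
  simp only [show F 0 (h+1) = 1 from rfl, Nat.cast_one, pow_zero, mul_one]

end

lemma seq_unique {t lam mu M : ℝ} {psi : ℕ → ℝ}
    (ht0 : 0 < t)
    (hlam0 : 0 < lam) (hlam1 : lam < 1) (hmu1 : 1 < mu)
    (hlameq : t * (4*lam^2 + 2*lam + 1) = lam)
    (hmueq : t * (4*mu^2 + 2*mu + 1) = mu)
    (hrec : ∀ h, psi (h+1) = t * (4 * psi (h+2) + 2 * psi (h+1) + psi h))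
    (hrec0 : psi 0 = t * (4 * psi 1 + 2 * psi 0))
    (hbd : ∀ h, |psi h| ≤ M) :
    psi 0 = 0 := by
  have hne : mu - lam ≠ 0 := by intro h; nlinarith
  set be := (psi 1 - lam * psi 0)/(mu - lam) with hbedef
  set al := psi 0 - be with haldef
  have key : ∀ h, psi h = al * lam^h + be * mu^h ∧
      psi (h+1) = al * lam^(h+1) + be * mu^(h+1) := by
    intro h
    induction h with
    | zero =>
      constructor
      · simp only [pow_zero, mul_one, haldef]; ring
      · simp only [pow_one, haldef, hbedef]
        field_simp
        ring
    | succ h ih =>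
      refine ⟨ih.2, ?_⟩
      have e := hrec h
      rw [ih.1, ih.2] at e
      have h4 : (4*t) ≠ 0 := by positivity
      have goal1 : 4*t*psi (h+2) = 4*t*(al * lam^(h+2) + be * mu^(h+2)) := by
        linear_combination -e - al*lam^h * hlameq - be*mu^h * hmueq
      have := mul_left_cancel₀ h4 goal1
      exact this
  -- be = 0
  have hbe0 : be = 0 := by
    by_contra hbe
    obtain ⟨h, hh⟩ := pow_unbounded_of_one_lt ((M + |al|)/|be|) hmu1
    have hbepos : 0 < |be| := abs_pos.mpr hbe
    have e : be * mu^h = psi h - al * lam^h := by linear_combination -(key h).1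
    have hpow0 : (0:ℝ) ≤ lam^h := (pow_pos hlam0 h).le
    have hpow1 : lam^h ≤ 1 := pow_le_one₀ hlam0.le hlam1.le
    have hM : 0 ≤ M := le_trans (abs_nonneg _) (hbd 0)
    have h1 : |be| * mu^h ≤ M + |al| := by
      have : |be * mu^h| ≤ |psi h| + |al * lam^h| := by
        rw [e, sub_eq_add_neg]
        exact (abs_add_le _ _).trans (by rw [abs_neg])
      have h2 : |al * lam^h| ≤ |al| := by
        rw [abs_mul, abs_pow, abs_of_pos hlam0]
        calc |al| * lam^h ≤ |al| * 1 := by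
              exact mul_le_mul_of_nonneg_left hpow1 (abs_nonneg al)
          _ = |al| := mul_one _
      have h3 : |be * mu^h| = |be| * mu^h := by
        rw [abs_mul, abs_pow, abs_of_pos (by linarith : (0:ℝ) < mu)]
      nlinarith [hbd h]
    have h4 : M + |al| < |be| * mu^h := by
      have := mul_lt_mul_of_pos_left hh hbepos
      rwa [mul_div_cancel₀ _ (ne_of_gt hbepos)] at this
    linarith
  -- al = 0
  have hp0 : psi 0 = al := by
    have := (key 0).1; simpa [hbe0] using this
  have hp1 : psi 1 = al * lam := by
    have := (key 0).2; simpa [hbe0] using this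
  have hfac : lam * (1 - 2*t - 4*t*lam) = t := by linear_combination -hlameq
  have hfacpos : 0 < 1 - 2*t - 4*t*lam := by nlinarith
  have hz : al * (1 - 2*t - 4*t*lam) = 0 := by
    rw [hp0, hp1] at hrec0
    linear_combination hrec0
  rcases mul_eq_zero.mp hz with h | h
  · rw [hp0, h]
  · linarith

section
variable {t : ℝ}

lemma alg_facts (ht0 : 0 < t) (ht7 : t < 1/7) :
    ∃ S lam mu : ℝ, S = Real.sqrt ((1+2*t)*(1-6*t)) ∧
      lam = (1-2*t-S)/(8*t) ∧ mu = (1-2*t+S)/(8*t) ∧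
      0 < lam ∧ lam < 1 ∧ 1 < mu ∧
      t * (4*lam^2 + 2*lam + 1) = lam ∧
      t * (4*mu^2 + 2*mu + 1) = mu := by
  have harg : (0:ℝ) < (1+2*t)*(1-6*t) := by nlinarith
  set S := Real.sqrt ((1+2*t)*(1-6*t)) with hSdef
  have hS0 : 0 < S := Real.sqrt_pos.mpr harg
  have hS2 : S^2 = 1 - 4*t - 12*t^2 := by
    rw [hSdef, Real.sq_sqrt harg.le]; ring
  have hSlt : S < 1-2*t := by nlinarith
  refine ⟨S, _, _, rfl, rfl, rfl, ?_, ?_, ?_, ?_, ?_⟩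
  · apply div_pos (by linarith) (by linarith)
  · rw [div_lt_one (by linarith : (0:ℝ) < 8*t)]
    nlinarith
  · rw [lt_div_iff₀ (by linarith : (0:ℝ) < 8*t)]
    nlinarith
  · field_simp
    linear_combination 4 * hS2
  · field_simp
    linear_combination 4 * hS2
end


/-- with all weights 1, the generating function of Motzkin N-meanders is
(10t - 1 + √((1+2t)(1-6t))) / (8t(1-7t)). -/
theorem motzkin_meander_gf :
    ∀ t : ℝ, 0 < t → t < 1 / 7 →
      HasSum (fun n : ℕ => (motzkinMeanderCount n : ℝ) * t ^ n)
        ((10 * t - 1 + Real.sqrt ((1 + 2 * t) * (1 - 6 * t))) / (8 * t * (1 - 7 * t))) := by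
  intro t ht0 ht7
  obtain ⟨S, lam, mu, hSdef, hlamdef, hmudef, hlam0, hlam1, hmu1, hlameq, hmueq⟩ :=
    alg_facts ht0 ht7
  have hden : (0:ℝ) < 1 - 7*t := by linarith
  set P := (1 - 7*t)⁻¹ with hPdef
  have hP0 : 0 < P := by positivity
  have hPeq : P = 1 + 7*t*P := by rw [hPdef]; field_simp; ring
  set psi : ℕ → ℝ := fun h => Phi t h - P + lam*P*lam^h with hpsidef
  have hrecS : ∀ h, psi (h+1) = t * (4 * psi (h+2) + 2 * psi (h+1) + psi h) := by
    intro h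
    have hphi := Phi_recS ht0 ht7 h
    simp only [hpsidef]
    linear_combination hphi - hPeq - (lam*P*lam^h) * hlameq
  have hrec0 : psi 0 = t * (4 * psi 1 + 2 * psi 0) := by
    have hphi0 := Phi_rec0 ht0 ht7
    simp only [hpsidef]
    linear_combination hphi0 - hPeq - P * hlameq
  have hbd : ∀ h, |psi h| ≤ P + P + lam*P := by
    intro h
    have h1 : 0 ≤ Phi t h := Phi_nonneg ht0 h
    have h2 : Phi t h ≤ P := Phi_le ht0 ht7 h
    have hpow0 : (0:ℝ) < lam^h := pow_pos hlam0 h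
    have hpow1 : lam^h ≤ 1 := pow_le_one₀ hlam0.le hlam1.le
    have hprod0 : 0 < lam*P*lam^h := by positivity
    have hprod1 : lam*P*lam^h ≤ lam*P := by
      have := mul_le_mul_of_nonneg_left hpow1 (mul_pos hlam0 hP0).le
      rwa [mul_one] at this
    rw [abs_le]
    constructor
    · simp only [hpsidef]
      linarith
    · simp only [hpsidef]
      linarith
  have hz := seq_unique ht0 hlam0 hlam1 hmu1 hlameq hmueq hrecS hrec0 hbd
  have hPhi0 : Phi t 0 = (1 - lam) * P := by
    have : Phi t 0 - P + lam*P*lam^0 = 0 := hz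
    simp only [pow_zero, mul_one] at this
    linarith
  have hform : (1 - lam) * P
      = (10 * t - 1 + Real.sqrt ((1 + 2 * t) * (1 - 6 * t))) / (8 * t * (1 - 7 * t)) := by
    rw [← hSdef, hlamdef, hPdef]
    field_simp
    ring
  have hcount : ∀ n : ℕ, (motzkinMeanderCount n : ℝ) = (F n 0 : ℝ) := by
    intro n
    rw [count_eq_card_WS n]
    have := card_WS n 0
    norm_num at this
    rw [this]
  have hs := (summable_F ht0 ht7 0).hasSum
  rw [show ∑' n, (F n 0 : ℝ) * t ^ n = Phi t 0 from rfl, hPhi0, hform] at hs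
  exact HasSum.congr_fun hs (fun n => by rw [hcount n])
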